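/- Let ℓ(t) = 2·log₂(2t + 1). Let n ≥ 1 be an integer and c > 1, λ > 0 be reals. Then n · Σ_{x=0}^∞ min(c·n·e^(−λx), 1) · ( ℓ((x+1)/n) − ℓ(x/n) ) ≤ (4·log₂ n)/λ + 6·c·(2 + 1/λ). -/

import Mathlib

/-- The concave increasing function `ℓ(t) = 2·log₂(2t + 1)` (with `ℓ(0) = 0`)
which upper-bounds the Elias gamma codeword length. -/
noncomputable def ell (t : ℝ) : ℝ := 2 * Real.logb 2 (2 * t + 1)

lemma ell_zero : ell 0 = 0 := by simp [ell]

lemma ell_diff_nonneg {s t : ℝ} (hs : 0 ≤ s) (hst : s ≤ t) : 0 ≤ ell t - ell s := by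
  have h1 : (0:ℝ) < 2 * s + 1 := by linarith
  have h2 : Real.log (2 * s + 1) ≤ Real.log (2 * t + 1) :=
    Real.log_le_log h1 (by linarith)
  have hln2 : (0:ℝ) < Real.log 2 := Real.log_pos one_lt_two
  have h3 : Real.log (2 * s + 1) / Real.log 2 ≤ Real.log (2 * t + 1) / Real.log 2 := by
    gcongr
  unfold ell Real.logb
  linarith

lemma ell_diff_le {s t : ℝ} (hs : 0 ≤ s) (hst : s ≤ t) :
    ell t - ell s ≤ 4 * (t - s) / Real.log 2 := by
  have hln2 : (0:ℝ) < Real.log 2 := Real.log_pos one_lt_two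
  have h1 : (0:ℝ) < 2 * s + 1 := by linarith
  have h2 : (0:ℝ) < 2 * t + 1 := by linarith
  have hq : (0:ℝ) < (2 * t + 1) / (2 * s + 1) := by positivity
  have hlog : Real.log (2 * t + 1) - Real.log (2 * s + 1) ≤ 2 * (t - s) := by
    have h3 : Real.log ((2 * t + 1) / (2 * s + 1)) ≤ (2 * t + 1) / (2 * s + 1) - 1 :=
      Real.log_le_sub_one_of_pos hq
    rw [Real.log_div h2.ne' h1.ne'] at h3
    have h4 : (2 * t + 1) / (2 * s + 1) - 1 ≤ 2 * (t - s) := by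
      rw [div_sub_one h1.ne', div_le_iff₀ h1]
      nlinarith
    linarith
  have heq : ell t - ell s
      = (2 * Real.log (2 * t + 1) - 2 * Real.log (2 * s + 1)) / Real.log 2 := by
    unfold ell Real.logb; ring
  rw [heq]
  gcongr
  linarith

set_option maxHeartbeats 1000000 in
/-- The key series estimate for the gap-encoding part of the
difference run-length scheme under an exponential tail:
`n · ∑_{x=0}^∞ min(c·n·e^{-λx}, 1)·(ℓ((x+1)/n) − ℓ(x/n)) ≤ (4·log₂ n)/λ + 6·c·(2 + 1/λ)`. -/
theorem gap_series_exponential_tail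
    (n : ℕ) (hn : 1 ≤ n) (c lam : ℝ) (hc : 1 < c) (hlam : 0 < lam) :
    (n : ℝ) * ∑' x : ℕ,
        min (c * n * Real.exp (-lam * x)) 1 * (ell ((x + 1) / n) - ell (x / n))
      ≤ 4 * Real.logb 2 n / lam + 6 * c * (2 + 1 / lam) := by
  have hln2 : (0:ℝ) < Real.log 2 := Real.log_pos one_lt_two
  have hn0 : (0:ℝ) < n := by exact_mod_cast hn
  have hn1 : (1:ℝ) ≤ n := by exact_mod_cast hn
  have hc0 : (0:ℝ) < c := by linarith
  have hcn1 : (1:ℝ) ≤ c * n := by nlinarith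
  have hcn0 : (0:ℝ) < c * n := by linarith
  set r : ℝ := Real.exp (-lam) with hrdef
  have hr0 : (0:ℝ) < r := Real.exp_pos _
  have hr1 : r < 1 := Real.exp_lt_one_iff.mpr (by linarith)
  have hrx : ∀ x : ℕ, Real.exp (-lam * x) = r ^ x := by
    intro x
    rw [hrdef, ← Real.exp_nat_mul]
    ring_nf
  set u : ℝ := Real.log (c * n) / lam with hudef
  have hu0 : 0 ≤ u := div_nonneg (Real.log_nonneg hcn1) hlam.le
  set x₀ : ℕ := ⌈u⌉₊ with hx₀def
  have hx₀u : u ≤ (x₀ : ℝ) := Nat.le_ceil u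
  have hx₀u' : (x₀ : ℝ) < u + 1 := Nat.ceil_lt_add_one hu0
  -- `c n r^{x₀} ≤ 1`
  have hrx₀ : c * n * r ^ x₀ ≤ 1 := by
    have h1 : Real.log (c * n) ≤ (x₀ : ℝ) * lam := by
      rw [hudef] at hx₀u
      exact (div_le_iff₀ hlam).mp hx₀u
    have h2 : c * n ≤ Real.exp ((x₀ : ℝ) * lam) := by
      calc c * n = Real.exp (Real.log (c * n)) := (Real.exp_log hcn0).symm
        _ ≤ _ := Real.exp_le_exp.mpr h1
    have h3 : r ^ x₀ = (Real.exp ((x₀ : ℝ) * lam))⁻¹ := by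
      rw [← hrx x₀, ← Real.exp_neg]
      ring_nf
    rw [h3]
    calc c * n * (Real.exp ((x₀:ℝ) * lam))⁻¹
        ≤ Real.exp ((x₀:ℝ) * lam) * (Real.exp ((x₀:ℝ) * lam))⁻¹ := by
          gcongr
      _ = 1 := mul_inv_cancel₀ (Real.exp_pos _).ne'
  -- `1 ≤ c n r^x` for `x < x₀`
  have hlt : ∀ x : ℕ, x < x₀ → 1 ≤ c * n * r ^ x := by
    intro x hx
    have hxu : (x : ℝ) < u := Nat.lt_ceil.mp hx
    have h1 : (x : ℝ) * lam ≤ Real.log (c * n) := by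
      rw [hudef] at hxu
      have := (lt_div_iff₀ hlam).mp hxu
      linarith
    have h2 : Real.exp ((x : ℝ) * lam) ≤ c * n := by
      calc Real.exp ((x:ℝ) * lam) ≤ Real.exp (Real.log (c * n)) := Real.exp_le_exp.mpr h1
        _ = c * n := Real.exp_log hcn0
    have h3 : r ^ x = (Real.exp ((x : ℝ) * lam))⁻¹ := by
      rw [← hrx x, ← Real.exp_neg]
      ring_nf
    rw [h3]
    calc (1:ℝ) = Real.exp ((x:ℝ) * lam) * (Real.exp ((x:ℝ) * lam))⁻¹ :=
          (mul_inv_cancel₀ (Real.exp_pos _).ne').symm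
      _ ≤ c * n * (Real.exp ((x:ℝ) * lam))⁻¹ := by gcongr
  set Kn : ℝ := 4 / (Real.log 2 * n) with hKn
  have hKn0 : 0 ≤ Kn := by positivity
  -- difference facts
  have hD0 : ∀ x : ℕ, 0 ≤ ell (((x:ℝ) + 1) / n) - ell ((x:ℝ) / n) := by
    intro x
    exact ell_diff_nonneg (by positivity) (by gcongr <;> linarith)
  have hDK : ∀ x : ℕ, ell (((x:ℝ) + 1) / n) - ell ((x:ℝ) / n) ≤ Kn := by
    intro x
    have h1 := ell_diff_le (s := (x:ℝ)/n) (t := ((x:ℝ)+1)/n) (by positivity)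
      (by gcongr <;> linarith)
    have h2 : 4 * (((x:ℝ) + 1) / n - (x:ℝ) / n) / Real.log 2 = Kn := by
      rw [hKn]
      field_simp
      ring
    linarith [h1, h2.symm.le]
  set f : ℕ → ℝ := fun x =>
    min (c * n * Real.exp (-lam * x)) 1 * (ell (((x:ℝ) + 1) / n) - ell ((x:ℝ) / n))
    with hfdef
  set g : ℕ → ℝ := fun x =>
    if x < x₀ then ell (((x:ℝ) + 1) / n) - ell ((x:ℝ) / n) else c * n * r ^ x * Kn
    with hgdef
  have hmin0 : ∀ x : ℕ, 0 ≤ min (c * n * Real.exp (-lam * x)) 1 :=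
    fun x => le_min (by positivity) zero_le_one
  have hf0 : ∀ x : ℕ, 0 ≤ f x := fun x => mul_nonneg (hmin0 x) (hD0 x)
  have hfg : ∀ x : ℕ, f x ≤ g x := by
    intro x
    rw [hfdef, hgdef]
    by_cases hx : x < x₀
    · simp only [hx, if_true]
      calc min (c * n * Real.exp (-lam * x)) 1 * (ell (((x:ℝ) + 1) / n) - ell ((x:ℝ) / n))
          ≤ 1 * (ell (((x:ℝ) + 1) / n) - ell ((x:ℝ) / n)) :=
            mul_le_mul_of_nonneg_right (min_le_right _ _) (hD0 x)
        _ = _ := one_mul _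
    · simp only [hx, if_false]
      have := hrx x
      calc min (c * n * Real.exp (-lam * x)) 1 * (ell (((x:ℝ) + 1) / n) - ell ((x:ℝ) / n))
          ≤ (c * n * Real.exp (-lam * x)) * Kn := by
            apply mul_le_mul (min_le_left _ _) (hDK x) (hD0 x) (by positivity)
        _ = c * n * r ^ x * Kn := by rw [hrx x]
  have hg0 : ∀ x : ℕ, 0 ≤ g x := by
    intro x
    rw [hgdef]
    by_cases hx : x < x₀
    · simpa [hx] using hD0 x
    · simp only [hx, if_false]
      positivity
  have hgle : ∀ x : ℕ, g x ≤ c * n * Kn * r ^ x := by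
    intro x
    rw [hgdef]
    by_cases hx : x < x₀
    · simp only [hx, if_true]
      have h1 := hlt x hx
      calc ell (((x:ℝ) + 1) / n) - ell ((x:ℝ) / n) ≤ Kn := hDK x
        _ = 1 * Kn := (one_mul _).symm
        _ ≤ (c * n * r ^ x) * Kn := mul_le_mul_of_nonneg_right h1 hKn0
        _ = c * n * Kn * r ^ x := by ring
    · simp only [hx, if_false]
      exact le_of_eq (by ring)
  have hgeom : Summable (fun x : ℕ => c * n * Kn * r ^ x) :=
    (summable_geometric_of_lt_one hr0.le hr1).mul_left _
  have hgsum : Summable g := Summable.of_nonneg_of_le hg0 hgle hgeom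
  have hfsum : Summable f := Summable.of_nonneg_of_le hf0 hfg hgsum
  have htsum_le : ∑' x, f x ≤ ∑' x, g x := Summable.tsum_le_tsum hfg hfsum hgsum
  -- compute tsum g
  have hsplit : ∑' x, g x
      = ∑ i ∈ Finset.range x₀, g i + ∑' i : ℕ, g (i + x₀) :=
    (hgsum.sum_add_tsum_nat_add x₀).symm
  have hpart1 : ∑ i ∈ Finset.range x₀, g i = ell ((x₀ : ℝ) / n) := by
    have h1 : ∀ i ∈ Finset.range x₀, g i
        = (fun j : ℕ => ell ((j : ℝ) / n)) (i + 1) - (fun j : ℕ => ell ((j : ℝ) / n)) i := by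
      intro i hi
      rw [hgdef]
      simp only [Finset.mem_range] at hi
      simp only [hi, if_true]
      push_cast
      ring_nf
    rw [Finset.sum_congr rfl h1, Finset.sum_range_sub (fun j : ℕ => ell ((j : ℝ) / n))]
    simp [ell_zero]
  have hpart2 : ∑' i : ℕ, g (i + x₀) = c * n * Kn * r ^ x₀ * (1 - r)⁻¹ := by
    have h1 : ∀ i : ℕ, g (i + x₀) = (c * n * Kn * r ^ x₀) * r ^ i := by
      intro i
      rw [hgdef]
      simp only [Nat.not_lt.mpr (Nat.le_add_left x₀ i), if_false]
      rw [pow_add]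
      ring
    rw [tsum_congr h1, tsum_mul_left, tsum_geometric_of_lt_one hr0.le hr1]
  -- bound the two pieces
  have hB1 : (n : ℝ) * ell ((x₀ : ℝ) / n) ≤ 4 * (x₀ : ℝ) / Real.log 2 := by
    have h1 := ell_diff_le (s := 0) (t := (x₀ : ℝ) / n) le_rfl (by positivity)
    rw [ell_zero, sub_zero] at h1
    have h2 : (n : ℝ) * ell ((x₀ : ℝ) / n) ≤ n * (4 * ((x₀ : ℝ) / n - 0) / Real.log 2) := by
      exact mul_le_mul_of_nonneg_left h1 hn0.le
    have h3 : (n : ℝ) * (4 * ((x₀ : ℝ) / n - 0) / Real.log 2) = 4 * (x₀ : ℝ) / Real.log 2 := by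
      field_simp
      ring
    linarith
  have hinv : (1 - r)⁻¹ ≤ 1 + 1 / lam := by
    have hA : (0:ℝ) < 1 + lam := by linarith
    have hexp : 1 + lam ≤ Real.exp lam := by
      have := Real.add_one_le_exp lam; linarith
    have hrle : r ≤ (1 + lam)⁻¹ := by
      rw [hrdef, Real.exp_neg]
      exact inv_anti₀ hA hexp
    have heq : 1 - (1 + lam)⁻¹ = lam / (1 + lam) := by
      field_simp
      ring
    have h1 : lam / (1 + lam) ≤ 1 - r := by
      rw [← heq]; linarith
    have hpos : (0:ℝ) < lam / (1 + lam) := by positivity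
    have h2 : (1 - r)⁻¹ ≤ (lam / (1 + lam))⁻¹ := inv_anti₀ hpos h1
    have h3 : (lam / (1 + lam))⁻¹ = 1 + 1 / lam := by
      rw [inv_div]
      field_simp
      ring
    linarith [h2, h3.le]
  have hB2 : (n : ℝ) * (c * n * Kn * r ^ x₀ * (1 - r)⁻¹)
      ≤ 4 / Real.log 2 * (1 + 1 / lam) := by
    have hnKn : (n : ℝ) * Kn = 4 / Real.log 2 := by
      rw [hKn]; field_simp
    have h1 : (n : ℝ) * (c * n * Kn * r ^ x₀ * (1 - r)⁻¹)
        = (c * n * r ^ x₀) * ((n : ℝ) * Kn) * (1 - r)⁻¹ := by ring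
    rw [h1, hnKn]
    have hi0 : (0:ℝ) < (1 - r)⁻¹ := by
      have : (0:ℝ) < 1 - r := by linarith
      positivity
    calc (c * n * r ^ x₀) * (4 / Real.log 2) * (1 - r)⁻¹
        ≤ 1 * (4 / Real.log 2) * (1 + 1 / lam) := by
          apply mul_le_mul
          · exact mul_le_mul_of_nonneg_right hrx₀ (by positivity)
          · exact hinv
          · exact hi0.le
          · positivity
      _ = 4 / Real.log 2 * (1 + 1 / lam) := by ring
  -- final numeric estimate
  have hlogc : Real.log c ≤ c - 1 := by
    have := Real.log_le_sub_one_of_pos hc0; linarith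
  have hlogn0 : 0 ≤ Real.log n := Real.log_nonneg hn1
  have hlogmul : Real.log (c * n) = Real.log c + Real.log n :=
    Real.log_mul hc0.ne' hn0.ne'
  have hln2gt : (2:ℝ)/3 ≤ Real.log 2 := by
    have := Real.log_two_gt_d9; linarith
  have hx₀lam : (x₀ : ℝ) * lam ≤ Real.log c + Real.log n + lam := by
    have h1 : (x₀ : ℝ) ≤ (Real.log c + Real.log n) / lam + 1 := by
      rw [hudef, hlogmul] at hx₀u'
      linarith
    have h2 : (x₀ : ℝ) * lam ≤ ((Real.log c + Real.log n) / lam + 1) * lam :=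
      mul_le_mul_of_nonneg_right h1 hlam.le
    have h3 : ((Real.log c + Real.log n) / lam + 1) * lam
        = Real.log c + Real.log n + lam := by field_simp
    linarith
  have key2 : 4 * (x₀:ℝ) * lam + 4 * lam + 4
      ≤ 4 * Real.log n + 6 * c * (2 * lam + 1) * Real.log 2 := by
    have q0 : (0:ℝ) ≤ 6 * c * (2 * lam + 1) := by nlinarith
    have q1 : 6 * c * (2 * lam + 1) * (2/3) ≤ 6 * c * (2 * lam + 1) * Real.log 2 :=
      mul_le_mul_of_nonneg_left hln2gt q0
    have q2 : 6 * c * (2 * lam + 1) * (2/3) = 8 * c * lam + 4 * c := by ring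
    have p2 : lam ≤ c * lam := le_mul_of_one_le_left hlam.le hc.le
    linarith
  have hfinal : 4 * (x₀:ℝ) / Real.log 2 + 4 / Real.log 2 * (1 + 1 / lam)
      ≤ 4 * Real.logb 2 (n : ℝ) / lam + 6 * c * (2 + 1 / lam) := by
    have e1 : 4 * (x₀:ℝ) / Real.log 2 + 4 / Real.log 2 * (1 + 1 / lam)
        = (4 * (x₀:ℝ) * lam + 4 * lam + 4) / (Real.log 2 * lam) := by
      field_simp
      ring
    have e2 : 4 * Real.logb 2 (n : ℝ) / lam + 6 * c * (2 + 1 / lam)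
        = (4 * Real.log n + 6 * c * (2 * lam + 1) * Real.log 2) / (Real.log 2 * lam) := by
      rw [Real.logb]
      field_simp
    rw [e1, e2]
    gcongr
  -- put everything together
  calc (n : ℝ) * ∑' x : ℕ, f x
      ≤ (n : ℝ) * ∑' x : ℕ, g x := mul_le_mul_of_nonneg_left htsum_le hn0.le
    _ = (n : ℝ) * ell ((x₀ : ℝ) / n) + (n : ℝ) * (c * n * Kn * r ^ x₀ * (1 - r)⁻¹) := by
        rw [hsplit, hpart1, hpart2]; ring
    _ ≤ 4 * (x₀ : ℝ) / Real.log 2 + 4 / Real.log 2 * (1 + 1 / lam) := by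
        linarith [hB1, hB2]
    _ ≤ _ := hfinal
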